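/- Compatibility when v = 0 and one register per round: In a round-based register protocol with visibility range v = 0 and dim = 1 register per round, for any finite set L of coverable locations there exists a single abstract execution σ_init →* σ such that every location of L belongs to S(σ). -/

import Mathlib

open scoped Classical

/-- Actions of a round-based register protocol: round increment, read of value `x`
from register `α` of round `k - i`, and write of value `x` to register `α` of the
current round. -/
inductive Act (dim : ℕ) (D : Type) where
  | incr : Act dim D
  | read (i : ℕ) (α : Fin dim) (x : D) : Act dim D
  | write (α : Fin dim) (x : D) : Act dim D

/-- A round-based register protocol. -/
structure Protocol (Q D : Type) (dim : ℕ) where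
  q0 : Q
  d0 : D
  v : ℕ
  T : Set (Q × Act dim D × Q)
  read_le : ∀ q i α x q', (q, Act.read i α x, q') ∈ T → i ≤ v
  write_ne : ∀ q α x q', (q, Act.write α x, q') ∈ T → x ≠ d0

/-- A move: a transition together with the round on which it is performed. -/
abbrev Move (Q D : Type) (dim : ℕ) := (Q × Act dim D × Q) × ℕ

/-- A concrete configuration: a finitely supported multiset of locations and a
valuation of all registers. -/
structure Conc (Q D : Type) (dim : ℕ) where
  loc : (Q × ℕ) →₀ ℕ
  reg : ℕ → Fin dim → D

variable {Q D : Type} {dim : ℕ}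

/-- Value read from register `α` of round `k - i` (registers of negative rounds
hold the initial value). -/
def regVal (P : Protocol Q D dim) (γ : Conc Q D dim) (k i : ℕ) (α : Fin dim) : D :=
  if i ≤ k then γ.reg (k - i) α else P.d0

/-- Updating register `α` of round `k` to value `x`. -/
def updReg (r : ℕ → Fin dim → D) (k : ℕ) (α : Fin dim) (x : D) : ℕ → Fin dim → D :=
  fun k' α' => if k' = k ∧ α' = α then x else r k' α'

/-- Concrete step relation of a round-based register protocol. -/
inductive ConcStep [DecidableEq Q] (P : Protocol Q D dim) :
    Conc Q D dim → Move Q D dim → Conc Q D dim → Prop where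
  | incr {q q' : Q} {k : ℕ} {γ γ' : Conc Q D dim} :
      (q, Act.incr, q') ∈ P.T → 0 < γ.loc (q, k) →
      γ'.loc = γ.loc - Finsupp.single (q, k) 1 + Finsupp.single (q', k + 1) 1 →
      γ'.reg = γ.reg →
      ConcStep P γ ((q, Act.incr, q'), k) γ'
  | read {q q' : Q} {k i : ℕ} {α : Fin dim} {x : D} {γ γ' : Conc Q D dim} :
      (q, Act.read i α x, q') ∈ P.T → 0 < γ.loc (q, k) →
      regVal P γ k i α = x →
      γ'.loc = γ.loc - Finsupp.single (q, k) 1 + Finsupp.single (q', k) 1 →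
      γ'.reg = γ.reg →
      ConcStep P γ ((q, Act.read i α x, q'), k) γ'
  | write {q q' : Q} {k : ℕ} {α : Fin dim} {x : D} {γ γ' : Conc Q D dim} :
      (q, Act.write α x, q') ∈ P.T → 0 < γ.loc (q, k) →
      γ'.loc = γ.loc - Finsupp.single (q, k) 1 + Finsupp.single (q', k) 1 →
      γ'.reg = updReg γ.reg k α x →
      ConcStep P γ ((q, Act.write α x, q'), k) γ'

/-- Concrete reachability. -/
def ConcReach [DecidableEq Q] (P : Protocol Q D dim) : Conc Q D dim → Conc Q D dim → Prop :=
  Relation.ReflTransGen (fun γ γ' => ∃ m, ConcStep P γ m γ')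

/-- Initial concrete configuration with `n` processes. -/
noncomputable def Conc.init [DecidableEq Q] (P : Protocol Q D dim) (n : ℕ) : Conc Q D dim :=
  ⟨Finsupp.single (P.q0, 0) n, fun _ _ => P.d0⟩

/-- Number of processes of a concrete configuration. -/
def Conc.size (γ : Conc Q D dim) : ℕ := γ.loc.sum fun _ n => n

/-- Support of the location multiset of a concrete configuration. -/
def Conc.supp (γ : Conc Q D dim) : Set (Q × ℕ) := {l | 0 < γ.loc l}

/-- The set of non-blank registers of a concrete configuration. -/
def Conc.nonBlank (P : Protocol Q D dim) (γ : Conc Q D dim) : Set (ℕ × Fin dim) :=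
  {r | γ.reg r.1 r.2 ≠ P.d0}

/-- An abstract configuration: a set of locations and a set of written registers. -/
structure Abs (Q : Type) (dim : ℕ) where
  S : Set (Q × ℕ)
  W : Set (ℕ × Fin dim)

/-- Abstract step relation. -/
inductive AbsStep (P : Protocol Q D dim) :
    Abs Q dim → Move Q D dim → Abs Q dim → Prop where
  | incr {σ : Abs Q dim} {q q' : Q} {k : ℕ} :
      (q, Act.incr, q') ∈ P.T → (q, k) ∈ σ.S →
      AbsStep P σ ((q, Act.incr, q'), k) ⟨σ.S ∪ {(q', k + 1)}, σ.W⟩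
  | readBlank {σ : Abs Q dim} {q q' : Q} {k i : ℕ} {α : Fin dim} :
      (q, Act.read i α P.d0, q') ∈ P.T → (q, k) ∈ σ.S →
      (i ≤ k → (k - i, α) ∉ σ.W) →
      AbsStep P σ ((q, Act.read i α P.d0, q'), k) ⟨σ.S ∪ {(q', k)}, σ.W⟩
  | readVal {σ : Abs Q dim} {q q' q1 q2 : Q} {k i : ℕ} {α : Fin dim} {x : D} :
      x ≠ P.d0 → (q, Act.read i α x, q') ∈ P.T → (q, k) ∈ σ.S →
      i ≤ k → (k - i, α) ∈ σ.W →
      (q1, Act.write α x, q2) ∈ P.T → (q1, k - i) ∈ σ.S → (q2, k - i) ∈ σ.S →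
      AbsStep P σ ((q, Act.read i α x, q'), k) ⟨σ.S ∪ {(q', k)}, σ.W⟩
  | write {σ : Abs Q dim} {q q' : Q} {k : ℕ} {α : Fin dim} {x : D} :
      (q, Act.write α x, q') ∈ P.T → (q, k) ∈ σ.S →
      AbsStep P σ ((q, Act.write α x, q'), k) ⟨σ.S ∪ {(q', k)}, σ.W ∪ {(k, α)}⟩

/-- Abstract reachability. -/
def AbsReach (P : Protocol Q D dim) : Abs Q dim → Abs Q dim → Prop :=
  Relation.ReflTransGen (fun σ σ' => ∃ m, AbsStep P σ m σ')

/-- The initial abstract configuration. -/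
def Abs.init (P : Protocol Q D dim) : Abs Q dim := ⟨{(P.q0, 0)}, ∅⟩

/-- Abstract execution along a list of moves. -/
inductive AbsRun (P : Protocol Q D dim) : Abs Q dim → List (Move Q D dim) → Abs Q dim → Prop
  | nil (σ : Abs Q dim) : AbsRun P σ [] σ
  | cons {σ σ' σ'' : Abs Q dim} {m : Move Q D dim} {ms : List (Move Q D dim)} :
      AbsStep P σ m σ' → AbsRun P σ' ms σ'' → AbsRun P σ (m :: ms) σ''

/-- First-write order of a schedule, given a set of already written registers. -/
noncomputable def fwo (W : Set (ℕ × Fin dim)) : List (Move Q D dim) → List (ℕ × Fin dim)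
  | [] => []
  | ((_, Act.write α _, _), k) :: ms =>
      if (k, α) ∈ W then fwo W ms else (k, α) :: fwo (W ∪ {(k, α)}) ms
  | _ :: ms => fwo W ms

/-- Projection of a sequence of registers onto those whose round lies in `[k - v, k]`. -/
def winproj (v k : ℕ) (F : List (ℕ × Fin dim)) : List (ℕ × Fin dim) :=
  F.filter (fun r => decide (k - v ≤ r.1 ∧ r.1 ≤ k))

namespace CompatAux

/-- Key used to sort moves: blank reads of round `k` get key `2k`, all other
moves of round `k` get key `2k + 1`. -/
noncomputable def key (P : Protocol Q D 1) : Move Q D 1 → ℕ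
  | ((_, Act.incr, _), k) => 2 * k + 1
  | ((_, Act.read _ _ x, _), k) => if x = P.d0 then 2 * k else 2 * k + 1
  | ((_, Act.write _ _, _), k) => 2 * k + 1

/-- Sorting relation on moves. -/
def kle (P : Protocol Q D 1) : Move Q D 1 → Move Q D 1 → Prop :=
  fun a b => key P a ≤ key P b

/-- The location added by a move. -/
def tgt : Move Q D 1 → Q × ℕ
  | ((_, Act.incr, q'), k) => (q', k + 1)
  | ((_, Act.read _ _ _, q'), k) => (q', k)
  | ((_, Act.write _ _, q'), k) => (q', k)

/-- The registers added to `W` by a move. -/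
def wrS : Move Q D 1 → Set (ℕ × Fin 1)
  | ((_, Act.incr, _), _) => ∅
  | ((_, Act.read _ _ _, _), _) => ∅
  | ((_, Act.write α _, _), k) => {(k, α)}

lemma key_le (P : Protocol Q D 1) (m : Move Q D 1) : key P m ≤ 2 * m.2 + 1 := by
  rcases m with ⟨⟨q, a, q'⟩, k⟩
  cases a with
  | incr => simp [key]
  | read i α x =>
      by_cases hx : x = P.d0 <;> simp [key, hx] <;> omega
  | write α x => simp [key]

lemma tgt_rnd_ge (m : Move Q D 1) : m.2 ≤ (tgt m).2 := by
  rcases m with ⟨⟨q, a, q'⟩, k⟩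
  cases a <;> simp [tgt]

lemma wr_rnd {r : ℕ × Fin 1} {m : Move Q D 1} (h : r ∈ wrS m) : r.1 = m.2 := by
  rcases m with ⟨⟨q, a, q'⟩, k⟩
  cases a with
  | incr => simp [wrS] at h
  | read i α x => simp [wrS] at h
  | write α x =>
      simp only [wrS, Set.mem_singleton_iff] at h
      subst h
      rfl

lemma wr_key (P : Protocol Q D 1) {r : ℕ × Fin 1} {m : Move Q D 1} (h : r ∈ wrS m) :
    r.1 = m.2 ∧ key P m = 2 * m.2 + 1 := by
  rcases m with ⟨⟨q, a, q'⟩, k⟩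
  cases a with
  | incr => simp [wrS] at h
  | read i α x => simp [wrS] at h
  | write α x =>
      simp only [wrS, Set.mem_singleton_iff] at h
      subst h
      simp [key]

variable {P : Protocol Q D 1}

lemma read_zero (hv : P.v = 0) {q q' : Q} {i : ℕ} {α : Fin 1} {x : D}
    (hT : (q, Act.read i α x, q') ∈ P.T) : i = 0 :=
  Nat.le_zero.mp (hv ▸ P.read_le q i α x q' hT)

lemma step_eq {σ τ : Abs Q 1} {m : Move Q D 1} (h : AbsStep P σ m τ) :
    τ = ⟨σ.S ∪ {tgt m}, σ.W ∪ wrS m⟩ := by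
  cases h <;> simp [tgt, wrS]

lemma step_lift (hv : P.v = 0) {σ τ σ' : Abs Q 1} {m : Move Q D 1}
    (h : AbsStep P σ m τ) (hS : σ.S ⊆ σ'.S) (hW : σ.W ⊆ σ'.W)
    (hb : ∀ q q' i (α : Fin 1) k, m = ((q, Act.read i α P.d0, q'), k) → (k, α) ∉ σ'.W) :
    AbsStep P σ' m ⟨σ'.S ∪ {tgt m}, σ'.W ∪ wrS m⟩ := by
  cases h with
  | incr hT hS1 =>
      simpa [tgt, wrS] using AbsStep.incr (σ := σ') hT (hS hS1)
  | readBlank hT hS1 hW1 =>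
      have hi : _ = 0 := read_zero hv hT
      subst hi
      exact (by
        simpa [tgt, wrS] using
          AbsStep.readBlank (σ := σ') hT (hS hS1)
            (fun _ => by simpa using hb _ _ _ _ _ rfl))
  | readVal hx hT hS1 hik hW1 hT2 hq1 hq2 =>
      simpa [tgt, wrS] using
        AbsStep.readVal (σ := σ') hx hT (hS hS1) hik (hW hW1) hT2 (hS hq1) (hS hq2)
  | write hT hS1 =>
      simpa [tgt, wrS] using AbsStep.write (σ := σ') hT (hS hS1)

lemma blank_cond (hv : P.v = 0) {σ τ : Abs Q 1} {q q' : Q} {i k : ℕ} {α : Fin 1}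
    (h : AbsStep P σ ((q, Act.read i α P.d0, q'), k) τ) : (k, α) ∉ σ.W := by
  cases h with
  | readBlank hT hS1 hW1 =>
      have hi : i = 0 := read_zero hv hT
      subst hi
      simpa using hW1 (Nat.zero_le k)
  | readVal hx hT hS1 hik hW1 hT2 hq1 hq2 => exact absurd rfl hx

lemma mem_transfer {σ σ1 : Abs Q 1} {m1 : Move Q D 1}
    (he1 : σ1 = ⟨σ.S ∪ {tgt m1}, σ.W ∪ wrS m1⟩)
    {p : Q} {j : ℕ} (hj : j < m1.2) (h : (p, j) ∈ σ1.S) : (p, j) ∈ σ.S := by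
  rw [he1] at h
  rcases (Set.mem_union _ _ _).1 h with h | h
  · exact h
  · have hj' : j = (tgt m1).2 := congrArg Prod.snd (Set.mem_singleton_iff.1 h)
    have := tgt_rnd_ge m1
    omega

lemma memW_transfer {σ σ1 : Abs Q 1} {m1 : Move Q D 1}
    (he1 : σ1 = ⟨σ.S ∪ {tgt m1}, σ.W ∪ wrS m1⟩)
    {j : ℕ} {α : Fin 1} (hj : j ≠ m1.2) (h : (j, α) ∈ σ1.W) : (j, α) ∈ σ.W := by
  rw [he1] at h
  rcases (Set.mem_union _ _ _).1 h with h | h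
  · exact h
  · exact absurd (wr_rnd h) hj

/-- Two adjacent moves with decreasing key can be swapped. -/
lemma swap_step (hv : P.v = 0) {σ σ1 σ2 : Abs Q 1} {m1 m2 : Move Q D 1}
    (h1 : AbsStep P σ m1 σ1) (h2 : AbsStep P σ1 m2 σ2)
    (hk : key P m2 < key P m1) :
    ∃ σ1', AbsStep P σ m2 σ1' ∧ AbsStep P σ1' m1 σ2 := by
  have he1 := step_eq h1
  have hkle1 := key_le P m1
  refine ⟨⟨σ.S ∪ {tgt m2}, σ.W ∪ wrS m2⟩, ?_, ?_⟩
  · -- moving `m2` before `m1`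
    cases h2 with
    | incr hT hS1 =>
        rename_i q q' k
        have hk2 : 2 * k + 1 < key P m1 := by simpa [key] using hk
        have hkm : k < m1.2 := by omega
        simpa [tgt, wrS] using AbsStep.incr (σ := σ) hT (mem_transfer he1 hkm hS1)
    | readBlank hT hS1 hW1 =>
        rename_i q q' k i α
        have hi : i = 0 := read_zero hv hT
        subst hi
        have hW1' : (k, α) ∉ σ1.W := by simpa using hW1 (Nat.zero_le k)
        have hk2 : 2 * k < key P m1 := by simpa [key] using hk
        have hkm : k ≤ m1.2 := by omega
        have hWσ : (k, α) ∉ σ.W := fun hc => hW1' (by rw [he1]; exact Or.inl hc)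
        rw [he1] at hS1
        rcases (Set.mem_union _ _ _).1 hS1 with hq | hq
        · simpa [tgt, wrS] using
            AbsStep.readBlank (σ := σ) hT hq (fun _ => by simpa using hWσ)
        · exfalso
          have hqe : (q, k) = tgt m1 := Set.mem_singleton_iff.1 hq
          have hrnd : k = (tgt m1).2 := congrArg Prod.snd hqe
          cases h1 with
          | incr h1T h1S =>
              simp [tgt] at hrnd
              omega
          | readBlank h1T h1S h1W =>
              rename_i q1 q1' k1 i1 α1
              simp [tgt] at hrnd
              simp [key] at hk2
              omega
          | readVal h1x h1T h1S h1ik h1W h1T2 h1q1 h1q2 =>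
              rename_i q1 q1' qa qb k1 i1 α1 x1
              have hi1 : i1 = 0 := read_zero hv h1T
              subst hi1
              simp [tgt] at hrnd
              apply hWσ
              have : ((k1 : ℕ), α1) ∈ σ.W := by simpa using h1W
              have hαα : α1 = α := Subsingleton.elim _ _
              rw [hrnd, ← hαα]
              exact this
          | write h1T h1S =>
              rename_i q1 q1' k1 α1 x1
              simp [tgt] at hrnd
              apply hW1'
              rw [he1]
              right
              have hαα : α = α1 := Subsingleton.elim _ _
              simp [wrS, hrnd, hαα]
    | readVal hx hT hS1 hik hW1 hT2 hq1 hq2 =>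
        rename_i q q' qa qb k i α x
        have hi : i = 0 := read_zero hv hT
        subst hi
        simp only [Nat.sub_zero] at hW1 hq1 hq2
        have hk2 : 2 * k + 1 < key P m1 := by simpa [key, hx] using hk
        have hkm : k < m1.2 := by omega
        have hW' : (k, α) ∈ σ.W := memW_transfer he1 (by omega) hW1
        simpa [tgt, wrS] using
          AbsStep.readVal (σ := σ) hx hT (mem_transfer he1 hkm hS1) (Nat.zero_le k)
            (by simpa using hW') hT2
            (by simpa using mem_transfer he1 hkm (by simpa using hq1))
            (by simpa using mem_transfer he1 hkm (by simpa using hq2))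
    | write hT hS1 =>
        rename_i q q' k α x
        have hk2 : 2 * k + 1 < key P m1 := by simpa [key] using hk
        have hkm : k < m1.2 := by omega
        simpa [tgt, wrS] using AbsStep.write (σ := σ) hT (mem_transfer he1 hkm hS1)
  · -- performing `m1` after `m2`
    have hb : ∀ q q' i (α : Fin 1) k, m1 = ((q, Act.read i α P.d0, q'), k) →
        (k, α) ∉ (Abs.mk (σ.S ∪ {tgt m2}) (σ.W ∪ wrS m2)).W := by
      intro q q' i α k heq hmem
      rcases (Set.mem_union _ _ _).1 hmem with hm | hm
      · exact blank_cond hv (heq ▸ h1) hm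
      · obtain ⟨h1', h2'⟩ := wr_key P hm
        have h1'' : k = m2.2 := h1'
        have hkm1 : key P m1 = 2 * k := by rw [heq]; simp [key]
        omega
    have hlift := step_lift hv h1 Set.subset_union_left Set.subset_union_left hb
    have heq2 : (Abs.mk ((σ.S ∪ {tgt m2}) ∪ {tgt m1}) ((σ.W ∪ wrS m2) ∪ wrS m1)) = σ2 := by
      rw [step_eq h2, he1]
      congr 1
      · exact Set.union_right_comm _ _ _
      · exact Set.union_right_comm _ _ _
    exact heq2 ▸ hlift

lemma run_cons_inv {σ τ : Abs Q 1} {m : Move Q D 1} {ms : List (Move Q D 1)}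
    (h : AbsRun P σ (m :: ms) τ) : ∃ σ', AbsStep P σ m σ' ∧ AbsRun P σ' ms τ := by
  cases h with | cons h1 h2 => exact ⟨_, h1, h2⟩

lemma run_nil_inv {σ τ : Abs Q 1} (h : AbsRun P σ [] τ) : τ = σ := by
  cases h; rfl

lemma run_orderedInsert (hv : P.v = 0) :
    ∀ (ns : List (Move Q D 1)) {σ τ : Abs Q 1} (m : Move Q D 1),
      List.Pairwise (kle P) ns → AbsRun P σ (m :: ns) τ →
      AbsRun P σ (List.orderedInsert (kle P) m ns) τ
  | [], σ, τ, m, _, h => by simpa [List.orderedInsert] using h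
  | n :: ns, σ, τ, m, hs, h => by
      by_cases hmn : kle P m n
      · simpa [List.orderedInsert, hmn] using h
      · have hkn : key P n < key P m := lt_of_not_ge hmn
        obtain ⟨σa, h1, hrest⟩ := run_cons_inv h
        obtain ⟨σb, h2, hrest2⟩ := run_cons_inv hrest
        obtain ⟨σc, s1, s2⟩ := swap_step hv h1 h2 hkn
        have ih := run_orderedInsert hv ns m hs.of_cons (AbsRun.cons s2 hrest2)
        simpa [List.orderedInsert, hmn] using AbsRun.cons s1 ih

lemma run_sort (hv : P.v = 0) :
    ∀ (ms : List (Move Q D 1)) {σ τ : Abs Q 1}, AbsRun P σ ms τ →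
      AbsRun P σ (List.insertionSort (kle P) ms) τ ∧
        List.Pairwise (kle P) (List.insertionSort (kle P) ms)
  | [], σ, τ, h => by simpa [List.insertionSort] using h
  | m :: ms, σ, τ, h => by
      obtain ⟨σ', h1, h2⟩ := run_cons_inv h
      obtain ⟨ih, ihs⟩ := run_sort hv ms h2
      letI : IsTotal (Move Q D 1) (kle P) := ⟨fun a b => le_total _ _⟩
      letI : IsTrans (Move Q D 1) (kle P) := ⟨fun _ _ _ hab hbc => le_trans hab hbc⟩
      constructor
      · simpa [List.insertionSort] using
          run_orderedInsert hv _ m ihs (AbsRun.cons h1 ih)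
      · simpa [List.insertionSort] using List.pairwise_insertionSort (kle P) (m :: ms)

lemma run_of_reach {σ τ : Abs Q 1} (h : AbsReach P σ τ) : ∃ ms, AbsRun P σ ms τ := by
  induction h using Relation.ReflTransGen.head_induction_on with
  | refl => exact ⟨[], AbsRun.nil _⟩
  | head hstep _ ih =>
      obtain ⟨m, hm⟩ := hstep
      obtain ⟨ms, hms⟩ := ih
      exact ⟨m :: ms, AbsRun.cons hm hms⟩

/-- The merging invariant. -/
def MAux (P : Protocol Q D 1) (N : ℕ) : Prop :=
  ∀ (ms ns : List (Move Q D 1)) (σm σn σm' σn' σ : Abs Q 1),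
    ms.length + ns.length ≤ N →
    AbsRun P σm ms σm' → AbsRun P σn ns σn' →
    List.Pairwise (kle P) ms → List.Pairwise (kle P) ns →
    σ.S = σm.S ∪ σn.S → σ.W = σm.W ∪ σn.W →
    (∀ r ∈ σ.W, ∀ x ∈ ms, 2 * r.1 + 1 ≤ key P x) →
    (∀ r ∈ σ.W, ∀ x ∈ ns, 2 * r.1 + 1 ≤ key P x) →
    ∃ σ', AbsReach P σ σ' ∧ σm'.S ⊆ σ'.S ∧ σn'.S ⊆ σ'.S

lemma merge_cons (hv : P.v = 0) {N : ℕ} (IH : MAux P N)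
    {m : Move Q D 1} {ms ns : List (Move Q D 1)} {σm σn σm' σn' σ : Abs Q 1}
    (hlen : (m :: ms).length + ns.length ≤ N + 1)
    (hrm : AbsRun P σm (m :: ms) σm') (hrn : AbsRun P σn ns σn')
    (hsm : List.Pairwise (kle P) (m :: ms)) (hsn : List.Pairwise (kle P) ns)
    (hS : σ.S = σm.S ∪ σn.S) (hW : σ.W = σm.W ∪ σn.W)
    (hbm : ∀ r ∈ σ.W, ∀ x ∈ m :: ms, 2 * r.1 + 1 ≤ key P x)
    (hbn : ∀ r ∈ σ.W, ∀ x ∈ ns, 2 * r.1 + 1 ≤ key P x)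
    (hle : ∀ x ∈ ns, key P m ≤ key P x) :
    ∃ σ', AbsReach P σ σ' ∧ σm'.S ⊆ σ'.S ∧ σn'.S ⊆ σ'.S := by
  obtain ⟨σm1, hstep, hrun⟩ := run_cons_inv hrm
  have hem := step_eq hstep
  have hstep' : AbsStep P σ m ⟨σ.S ∪ {tgt m}, σ.W ∪ wrS m⟩ := by
    refine step_lift hv hstep (hS ▸ Set.subset_union_left) (hW ▸ Set.subset_union_left) ?_
    intro q q' i α k heq hmem
    have h1 : 2 * k + 1 ≤ key P m := hbm (k, α) hmem m (List.mem_cons_self)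
    rw [heq] at h1
    simp [key] at h1
  have hS1 : (Abs.mk (σ.S ∪ {tgt m}) (σ.W ∪ wrS m)).S = σm1.S ∪ σn.S := by
    rw [hem, hS]
    exact Set.union_right_comm _ _ _
  have hW1 : (Abs.mk (σ.S ∪ {tgt m}) (σ.W ∪ wrS m)).W = σm1.W ∪ σn.W := by
    rw [hem, hW]
    exact Set.union_right_comm _ _ _
  have hbm' : ∀ r ∈ (Abs.mk (σ.S ∪ {tgt m}) (σ.W ∪ wrS m)).W, ∀ x ∈ ms,
      2 * r.1 + 1 ≤ key P x := by
    intro r hr x hx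
    rcases (Set.mem_union _ _ _).1 hr with hr | hr
    · exact hbm r hr x (List.mem_cons_of_mem _ hx)
    · obtain ⟨h1', h2'⟩ := wr_key P hr
      have := List.rel_of_pairwise_cons hsm hx
      have hkk : key P m ≤ key P x := this
      omega
  have hbn' : ∀ r ∈ (Abs.mk (σ.S ∪ {tgt m}) (σ.W ∪ wrS m)).W, ∀ x ∈ ns,
      2 * r.1 + 1 ≤ key P x := by
    intro r hr x hx
    rcases (Set.mem_union _ _ _).1 hr with hr | hr
    · exact hbn r hr x hx
    · obtain ⟨h1', h2'⟩ := wr_key P hr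
      have hkk : key P m ≤ key P x := hle x hx
      omega
  obtain ⟨σ', hr', hm', hn'⟩ :=
    IH ms ns σm1 σn σm' σn' ⟨σ.S ∪ {tgt m}, σ.W ∪ wrS m⟩
      (by simp at hlen ⊢; omega) hrun hrn hsm.of_cons hsn hS1 hW1 hbm' hbn'
  exact ⟨σ', Relation.ReflTransGen.head ⟨m, hstep'⟩ hr', hm', hn'⟩

lemma merge_aux (hv : P.v = 0) : ∀ N, MAux P N := by
  intro N
  induction N with
  | zero =>
      intro ms ns σm σn σm' σn' σ hlen hrm hrn _ _ hS _ _ _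
      have hms : ms = [] := List.eq_nil_of_length_eq_zero (by omega)
      have hns : ns = [] := List.eq_nil_of_length_eq_zero (by omega)
      subst hms; subst hns
      have h1 := run_nil_inv hrm
      have h2 := run_nil_inv hrn
      subst h1; subst h2
      exact ⟨σ, Relation.ReflTransGen.refl,
        hS ▸ Set.subset_union_left, hS ▸ Set.subset_union_right⟩
  | succ N IH =>
      intro ms ns σm σn σm' σn' σ hlen hrm hrn hsm hsn hS hW hbm hbn
      cases ms with
      | nil =>
          cases ns with
          | nil =>
              have h1 := run_nil_inv hrm
              have h2 := run_nil_inv hrn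
              subst h1; subst h2
              exact ⟨σ, Relation.ReflTransGen.refl,
                hS ▸ Set.subset_union_left, hS ▸ Set.subset_union_right⟩
          | cons n ns' =>
              obtain ⟨σ', hr', hn', hm'⟩ :=
                merge_cons hv IH (by simp at hlen ⊢; omega) hrn hrm hsn hsm
                  (by rw [hS, Set.union_comm]) (by rw [hW, Set.union_comm])
                  hbn hbm (by simp)
              exact ⟨σ', hr', hm', hn'⟩
      | cons m ms' =>
          cases ns with
          | nil =>
              exact merge_cons hv IH hlen hrm hrn hsm hsn hS hW hbm hbn (by simp)
          | cons n ns' =>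
              by_cases hmn : key P m ≤ key P n
              · refine merge_cons hv IH (by simp at hlen ⊢; omega) hrm hrn hsm hsn
                  hS hW hbm hbn ?_
                intro x hx
                rcases List.mem_cons.1 hx with rfl | hx
                · exact hmn
                · exact le_trans hmn (List.rel_of_pairwise_cons hsn hx)
              · have hle : ∀ x ∈ m :: ms', key P n ≤ key P x := by
                  intro x hx
                  have hnm : key P n ≤ key P m := le_of_lt (lt_of_not_ge hmn)
                  rcases List.mem_cons.1 hx with rfl | hx
                  · exact hnm
                  · exact le_trans hnm (List.rel_of_pairwise_cons hsm hx)
                obtain ⟨σ', hr', hn', hm'⟩ :=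
                  merge_cons hv IH (by simp at hlen ⊢; omega) hrn hrm hsn hsm
                    (by rw [hS, Set.union_comm]) (by rw [hW, Set.union_comm])
                    hbn hbm hle
                exact ⟨σ', hr', hm', hn'⟩

lemma merge_reach (hv : P.v = 0) {σ1 σ2 : Abs Q 1}
    (h1 : AbsReach P (Abs.init P) σ1) (h2 : AbsReach P (Abs.init P) σ2) :
    ∃ σ, AbsReach P (Abs.init P) σ ∧ σ1.S ⊆ σ.S ∧ σ2.S ⊆ σ.S := by
  obtain ⟨ms, hms⟩ := run_of_reach h1
  obtain ⟨ns, hns⟩ := run_of_reach h2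
  obtain ⟨hms', hsms⟩ := run_sort hv ms hms
  obtain ⟨hns', hsns⟩ := run_sort hv ns hns
  have hreach : ∀ {σ σ' : Abs Q 1} (ms' : List (Move Q D 1)),
      AbsRun P σ ms' σ' → AbsReach P σ σ' := by
    intro σ σ' ms' h
    induction h with
    | nil => exact Relation.ReflTransGen.refl
    | cons hstep _ ih => exact Relation.ReflTransGen.head ⟨_, hstep⟩ ih
  obtain ⟨σ, hr, hs1, hs2⟩ :=
    merge_aux hv ((List.insertionSort (kle P) ms).length + (List.insertionSort (kle P) ns).length)
      _ _ (Abs.init P) (Abs.init P) σ1 σ2 (Abs.init P) le_rfl hms' hns' hsms hsns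
      (Set.union_self _).symm (by simp [Abs.init]) (by simp [Abs.init]) (by simp [Abs.init])
  exact ⟨σ, hr, hs1, hs2⟩

end CompatAux

/-- Compatibility of coverable locations when `v = 0` and there is a single
register per round (Proposition 2). -/
theorem all_compatible_v0_dim1 {Q D : Type}
    (P : Protocol Q D 1) (hv : P.v = 0)
    (L : Finset (Q × ℕ))
    (hcov : ∀ l ∈ L, ∃ σ : Abs Q 1, AbsReach P (Abs.init P) σ ∧ l ∈ σ.S) :
    ∃ σ : Abs Q 1, AbsReach P (Abs.init P) σ ∧ ∀ l ∈ L, l ∈ σ.S := by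
  classical
  revert hcov
  refine Finset.induction_on L ?_ ?_
  · intro _
    exact ⟨Abs.init P, Relation.ReflTransGen.refl, by simp⟩
  · intro a s _ ih hcov
    obtain ⟨σ1, hr1, hc1⟩ := ih (fun l hl => hcov l (Finset.mem_insert_of_mem hl))
    obtain ⟨σ2, hr2, hc2⟩ := hcov a (Finset.mem_insert_self _ _)
    obtain ⟨σ, hr, hs1, hs2⟩ := CompatAux.merge_reach hv hr1 hr2
    refine ⟨σ, hr, ?_⟩
    intro l hl
    rcases Finset.mem_insert.1 hl with rfl | hl
    · exact hs2 hc2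
    · exact hs1 (hc1 l hl)
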